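/- Let (G,E) be a contracting self-similar groupoid action on a finite directed graph E with no sinks and no sources, with limit space J and induced shift σ̃ : J → J. Let J_∞ = lim←(J, σ̃) = { (z_n)_{n≥1} ∈ J^ℕ : σ̃(z_{n+1}) = z_n for all n } with the subspace topology from the product, and let σ̃_∞ : J_∞ → J_∞ be the homeomorphism σ̃_∞(z₁, z₂, …) = (σ̃(z₁), z₁, z₂, …). Let S = E^ℤ/∼ be the limit solenoid, the quotient of the bi-infinite path space by asymptotic equivalence. Then there is a homeomorphism θ : S → J_∞ with θ([x]) = ([x(-∞,-1)], [x(-∞,0)], [x(-∞,1)], …) for all x ∈ E^ℤ, where x(-∞,n) ∈ E^{-∞} denotes the left-infinite path …x_{n-1}x_n; moreover θ([τ(x)]) = σ̃_∞(θ([x])) for all x ∈ E^ℤ, where τ is the translation (τ(x))_n = x_{n-1}. -/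

import Mathlib

/-!
Self-similar groupoid actions on finite directed graphs, following
Brownlowe–Buss–Gonçalves–Hume–Sims–Whittaker,
"KK-duality for self-similar groupoid actions on graphs".

A directed graph is given by a vertex type `V`, an edge type `E` and
range/source maps `rE sE : E → V`.  A finite path is modelled as a list of
edges together with a base vertex (its range): the list `[e₁, …, eₙ]` is the
path `e₁ … eₙ` read from left to right, so consecutive edges satisfy
`sE eᵢ = rE eᵢ₊₁`.  The groupoid of a self-similar action, its partial
multiplication, the action on finite paths and the restriction maps are
modelled as total functions whose values are only constrained (by the axioms
of the structure `SSA`) on their natural domains.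
-/

universe u

namespace SSG

variable {V E : Type u}

/-- `l` is a trail: the source of each edge is the range of the next. -/
def IsTrail (rE sE : E → V) (l : List E) : Prop :=
  List.Chain' (fun e f => sE e = rE f) l

/-- `FromV rE sE v l` : `l` is a finite path whose range (leftmost vertex) is `v`. -/
def FromV (rE sE : E → V) (v : V) (l : List E) : Prop :=
  IsTrail rE sE l ∧ ∀ e, l.head? = some e → rE e = v

/-- The source (rightmost vertex) of the finite path `l` with range `v`. -/
def trailSrc (sE : E → V) (v : V) (l : List E) : V :=
  l.getLast?.elim v sE

/-- A (faithful) self-similar groupoid action `(G, E)` on the directed graph with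
vertices `V`, edges `E`, range map `rE` and source map `sE`.  Here `d`/`c` are
the domain/codomain maps of the groupoid `G` (its units are `unit v` for
`v : V`), `mul h g` is the composite `h ∘ g` (junk unless `d h = c g`),
`act g l` is `g · l` for finite paths `l` with range `d g` (junk otherwise)
and `res g l` is the restriction `g|_l` (junk otherwise). -/
structure SSA (V E : Type u) (rE sE : E → V) : Type (u + 1) where
  G : Type u
  d : G → V
  c : G → V
  mul : G → G → G
  inv : G → G
  unit : V → G
  act : G → List E → List E
  res : G → List E → G
  d_unit : ∀ v, d (unit v) = v
  c_unit : ∀ v, c (unit v) = v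
  d_mul : ∀ g h, d h = c g → d (mul h g) = d g
  c_mul : ∀ g h, d h = c g → c (mul h g) = c h
  mul_assoc : ∀ g h k, d h = c g → d k = c h → mul k (mul h g) = mul (mul k h) g
  unit_mul : ∀ g, mul (unit (c g)) g = g
  mul_unit : ∀ g, mul g (unit (d g)) = g
  d_inv : ∀ g, d (inv g) = c g
  c_inv : ∀ g, c (inv g) = d g
  inv_mul : ∀ g, mul (inv g) g = unit (d g)
  mul_inv : ∀ g, mul g (inv g) = unit (c g)
  act_fromV : ∀ g l, FromV rE sE (d g) l → FromV rE sE (c g) (act g l)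
  act_length : ∀ g l, FromV rE sE (d g) l → (act g l).length = l.length
  act_unit : ∀ v l, FromV rE sE v l → act (unit v) l = l
  act_mul : ∀ g h l, d h = c g → FromV rE sE (d g) l →
    act (mul h g) l = act h (act g l)
  faithful : ∀ g h, d g = d h → c g = c h →
    (∀ l, FromV rE sE (d g) l → act g l = act h l) → g = h
  res_nil : ∀ g, res g [] = g
  d_res : ∀ g l, FromV rE sE (d g) l → d (res g l) = trailSrc sE (d g) l
  c_res : ∀ g l, FromV rE sE (d g) l → c (res g l) = trailSrc sE (c g) (act g l)
  res_append : ∀ g l m, FromV rE sE (d g) l →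
    FromV rE sE (trailSrc sE (d g) l) m → res g (l ++ m) = res (res g l) m
  act_append : ∀ g l m, FromV rE sE (d g) l →
    FromV rE sE (trailSrc sE (d g) l) m →
    act g (l ++ m) = act g l ++ act (res g l) m

variable {rE sE : E → V}

/-- `F` is a contracting core for the self-similar groupoid action `A`. -/
def SSA.IsCore (A : SSA V E rE sE) (F : Set A.G) : Prop :=
  F.Finite ∧ ∀ g : A.G, ∃ n : ℕ, ∀ l : List E,
    FromV rE sE (A.d g) l → l.length = n → A.res g l ∈ F

/-- The action is contracting if it admits a contracting core. -/
def SSA.Contracting (A : SSA V E rE sE) : Prop :=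
  ∃ F : Set A.G, A.IsCore F

/-- The nucleus: the intersection of all contracting cores. -/
def SSA.nucleus (A : SSA V E rE sE) : Set A.G :=
  ⋂₀ {F : Set A.G | A.IsCore F}

/-- The action is recurrent. -/
def SSA.Recurrent (A : SSA V E rE sE) : Prop :=
  ∀ e f : E, ∀ h : A.G, A.d h = sE e → A.c h = sE f →
    ∃ g : A.G, A.d g = rE e ∧ A.act g [e] = [f] ∧ A.res g [e] = h

/-- The action is level-transitive: any two paths of the same length lie in
one orbit. -/
def SSA.LevelTransitive (A : SSA V E rE sE) : Prop :=
  ∀ (v w : V) (l m : List E), FromV rE sE v l → FromV rE sE w m →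
    l.length = m.length → ∃ g : A.G, A.d g = v ∧ A.c g = w ∧ A.act g l = m

/-- Every element of the groupoid is a finite composable product of
elements of `H`. -/
def SSA.GeneratedBy (A : SSA V E rE sE) (H : Set A.G) : Prop :=
  ∀ g : A.G, ∃ (h : A.G) (t : List A.G), h ∈ H ∧ (∀ k ∈ t, k ∈ H) ∧
    List.Chain' (fun a b => A.d a = A.c b) (h :: t) ∧ t.foldl A.mul h = g

/-- The groupoid of the action is finitely generated. -/
def SSA.FinitelyGenerated (A : SSA V E rE sE) : Prop :=
  ∃ H : Set A.G, H.Finite ∧ A.GeneratedBy H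

/-- The graph has no sources: every vertex receives an edge. -/
def NoSources (rE : E → V) : Prop := ∀ v : V, ∃ e : E, rE e = v

/-- The graph has no sinks: every vertex emits an edge. -/
def NoSinks (sE : E → V) : Prop := ∀ v : V, ∃ e : E, sE e = v

/-- The graph is strongly connected: it has an edge, and any ordered pair of
vertices is joined by a finite path. -/
def StronglyConnected (rE sE : E → V) : Prop :=
  Nonempty E ∧ ∀ v w : V, ∃ l : List E, FromV rE sE v l ∧ trailSrc sE v l = w

/-- Right-infinite paths `y₁ y₂ y₃ …` (here `y k` is the edge `y_{k+1}`). -/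
def RightPath (rE sE : E → V) : Type u :=
  {y : ℕ → E // ∀ k, sE (y k) = rE (y (k + 1))}

/-- The initial segment `y₁ … yₙ` of a right-infinite path. -/
def RightPath.trunc (y : RightPath rE sE) (n : ℕ) : List E :=
  (List.range n).map y.1

/-- The action is regular: whenever `g` fixes a right-infinite path `y`
(equivalently, all its initial segments), `g` acts trivially on some cylinder
neighbourhood of `y`: some initial segment `μ` of `y` satisfies `g·μ = μ` and
`g|_μ = s(μ)`. -/
def SSA.Regular (A : SSA V E rE sE) : Prop :=
  ∀ (g : A.G) (y : RightPath rE sE), A.d g = rE (y.1 0) →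
    (∀ n : ℕ, A.act g (y.trunc n) = y.trunc n) →
    ∃ n : ℕ, A.act g (y.trunc n) = y.trunc n ∧
      A.res g (y.trunc n) = A.unit (trailSrc sE (A.d g) (y.trunc n))

/-- Left-infinite paths `… x₋₂ x₋₁` (here `x k` is the edge `x_{-(k+1)}`). -/
def LeftPath (rE sE : E → V) : Type u :=
  {x : ℕ → E // ∀ k, sE (x (k + 1)) = rE (x k)}

instance [TopologicalSpace E] : TopologicalSpace (LeftPath rE sE) :=
  inferInstanceAs (TopologicalSpace {x : ℕ → E // ∀ k, sE (x (k + 1)) = rE (x k)})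

/-- The finite path `x₋ₘ … x₋₁`. -/
def LeftPath.trunc (x : LeftPath rE sE) (m : ℕ) : List E :=
  ((List.range m).reverse).map x.1

/-- The shift on left-infinite paths, deleting the rightmost edge. -/
def LeftPath.shift (x : LeftPath rE sE) : LeftPath rE sE :=
  ⟨fun k => x.1 (k + 1), fun k => x.2 (k + 1)⟩

/-- Asymptotic equivalence of left-infinite paths: some sequence `(gₙ)` in the
groupoid with finitely many distinct values satisfies
`gₙ · (xₙ … x₋₁) = yₙ … y₋₁` for all `n < 0`. -/
def SSA.AsympEq (A : SSA V E rE sE) (x y : LeftPath rE sE) : Prop :=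
  ∃ g : ℕ → A.G, (Set.range g).Finite ∧
    (∀ m : ℕ, A.d (g m) = rE (x.1 m)) ∧
    (∀ m : ℕ, A.act (g m) (x.trunc (m + 1)) = y.trunc (m + 1))

/-- The cylinder set `Z(l]` of left-infinite paths ending in `l`. -/
def cylL (rE sE : E → V) (l : List E) : Set (LeftPath rE sE) :=
  {x : LeftPath rE sE | x.trunc l.length = l}

/-- The basic subset `U_l` of the limit space attached to a finite path `l`
with range `v`. -/
def SSA.limitU (A : SSA V E rE sE) (v : V) (l : List E) :
    Set (Quot A.AsympEq) :=
  {z : Quot A.AsympEq | ∀ x : LeftPath rE sE, Quot.mk A.AsympEq x = z →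
    ∃ g ∈ A.nucleus, A.d g = v ∧ x ∈ cylL rE sE (A.act g l)}

/-- Bi-infinite paths `… x₋₁ x₀ x₁ …`. -/
def BiPath (rE sE : E → V) : Type u :=
  {x : ℤ → E // ∀ k : ℤ, sE (x k) = rE (x (k + 1))}

instance [TopologicalSpace E] : TopologicalSpace (BiPath rE sE) :=
  inferInstanceAs (TopologicalSpace {x : ℤ → E // ∀ k : ℤ, sE (x k) = rE (x (k + 1))})

/-- The finite segment `xₙ x_{n+1} … x_{n+m-1}` of a bi-infinite path. -/
def BiPath.seg (x : BiPath rE sE) (n : ℤ) (m : ℕ) : List E :=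
  (List.range m).map fun i => x.1 (n + i)

/-- Asymptotic equivalence of bi-infinite paths: some sequence `(gₙ)_{n ∈ ℤ}`
with finitely many distinct values satisfies
`gₙ · (xₙ x_{n+1} …) = yₙ y_{n+1} …` for all `n`. -/
def SSA.AsympEqZ (A : SSA V E rE sE) (x y : BiPath rE sE) : Prop :=
  ∃ g : ℤ → A.G, (Set.range g).Finite ∧
    (∀ n : ℤ, A.d (g n) = rE (x.1 n)) ∧
    (∀ (n : ℤ) (m : ℕ), A.act (g n) (x.seg n m) = y.seg n m)

/-- The left-infinite path `x(-∞, n) = … x_{n-1} xₙ` of a bi-infinite path. -/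
def BiPath.tail (x : BiPath rE sE) (n : ℤ) : LeftPath rE sE :=
  ⟨fun k => x.1 (n - k), by
    intro k
    have h := x.2 (n - ((k : ℤ) + 1))
    have h2 : n - ((k : ℤ) + 1) + 1 = n - (k : ℤ) := by ring
    have h3 : (n - ((k + 1 : ℕ) : ℤ)) = n - ((k : ℤ) + 1) := by push_cast; ring
    show sE (x.1 (n - ((k + 1 : ℕ) : ℤ))) = rE (x.1 (n - (k : ℤ)))
    rw [h3, ← h2]
    exact h⟩

/-- The translation `τ` on bi-infinite paths, `(τ x)ₙ = x_{n-1}`. -/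
def BiPath.translate (x : BiPath rE sE) : BiPath rE sE :=
  ⟨fun m => x.1 (m - 1), by
    intro k
    have h := x.2 (k - 1)
    have h2 : (k - 1 + 1 : ℤ) = k + 1 - 1 := by ring
    rw [h2] at h
    exact h⟩

/-- The shift homeomorphism `σ̃_∞` on the inverse limit `lim← (J, T)`. -/
def solShift {J : Type*} (T : J → J)
    (z : {z : ℕ → J // ∀ n, T (z (n + 1)) = z n}) :
    {z : ℕ → J // ∀ n, T (z (n + 1)) = z n} :=
  ⟨fun n => match n with
    | 0 => T (z.1 0)
    | m + 1 => z.1 m,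
   fun n => match n with
    | 0 => rfl
    | m + 1 => z.2 m⟩

/-- The distance function of a bundled metric space. -/
def mdist {Y : Type*} (m : MetricSpace Y) (a b : Y) : ℝ := by
  letI := m; exact dist a b

/-- The open ball of a bundled metric space. -/
def mball {Y : Type*} (m : MetricSpace Y) (a : Y) (r : ℝ) : Set Y := by
  letI := m; exact Metric.ball a r

/-- The topology induced by a bundled metric space. -/
def mtop {Y : Type*} (m : MetricSpace Y) : TopologicalSpace Y := by
  letI := m; exact inferInstance


/-! ### Auxiliary lemmas -/

section Aux

variable {rE sE : E → V}

lemma fromV_nil (v : V) : FromV rE sE v [] :=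
  ⟨List.isChain_nil, fun e he => by simp at he⟩

lemma trailSrc_nil (v : V) : trailSrc sE v [] = v := rfl

lemma trailSrc_cons (v : V) (e : E) (l : List E) :
    trailSrc sE v (e :: l) = trailSrc sE (sE e) l := by
  cases l with
  | nil => rfl
  | cons f t =>
    cases hl : (f :: t).getLast? with
    | none => simp at hl
    | some a => simp [trailSrc, List.getLast?_cons_cons, hl]

lemma fromV_cons {v : V} {e : E} {l : List E} (h : FromV rE sE v (e :: l)) :
    rE e = v ∧ FromV rE sE (sE e) l := by
  obtain ⟨ht, hh⟩ := h
  refine ⟨hh e rfl, ht.tail, ?_⟩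
  intro f hf
  cases l with
  | nil => simp at hf
  | cons f' t =>
    rw [List.head?_cons, Option.some.injEq] at hf; subst hf
    exact (List.isChain_cons_cons.mp ht).1.symm

lemma fromV_cons_intro {v : V} {e : E} {l : List E} (he : rE e = v)
    (h : FromV rE sE (sE e) l) : FromV rE sE v (e :: l) := by
  refine ⟨List.isChain_cons.mpr ⟨fun f hf => (h.2 f (Option.mem_def.mp hf)).symm, h.1⟩, ?_⟩
  intro f hf
  rw [List.head?_cons, Option.some.injEq] at hf
  subst hf; exact he

lemma fromV_append {v : V} {l₁ l₂ : List E} (h : FromV rE sE v (l₁ ++ l₂)) :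
    FromV rE sE v l₁ ∧ FromV rE sE (trailSrc sE v l₁) l₂ := by
  induction l₁ generalizing v with
  | nil => exact ⟨fromV_nil v, h⟩
  | cons e t ih =>
    rw [List.cons_append] at h
    obtain ⟨he, h'⟩ := fromV_cons h
    obtain ⟨h₁, h₂⟩ := ih h'
    exact ⟨fromV_cons_intro he h₁, by rwa [trailSrc_cons]⟩

lemma fromV_append_intro {v : V} {l₁ l₂ : List E} (h₁ : FromV rE sE v l₁)
    (h₂ : FromV rE sE (trailSrc sE v l₁) l₂) : FromV rE sE v (l₁ ++ l₂) := by
  induction l₁ generalizing v with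
  | nil => exact h₂
  | cons e t ih =>
    obtain ⟨he, h₁'⟩ := fromV_cons h₁
    rw [trailSrc_cons] at h₂
    exact fromV_cons_intro he (ih h₁' h₂)

end Aux

section Paths

variable {rE sE : E → V}

lemma trunc_zero (x : LeftPath rE sE) : x.trunc 0 = [] := rfl

lemma trunc_succ (x : LeftPath rE sE) (m : ℕ) :
    x.trunc (m + 1) = x.1 m :: x.trunc m := by
  simp [LeftPath.trunc, List.range_succ]

lemma trunc_length (x : LeftPath rE sE) (m : ℕ) : (x.trunc m).length = m := by
  simp [LeftPath.trunc]

lemma trunc_head (x : LeftPath rE sE) (m : ℕ) :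
    (x.trunc (m + 1)).head? = some (x.1 m) := by
  rw [trunc_succ]; rfl

lemma fromV_trunc (x : LeftPath rE sE) (m : ℕ) :
    FromV rE sE (rE (x.1 m)) (x.trunc (m + 1)) := by
  induction m with
  | zero =>
    rw [trunc_succ, trunc_zero]
    exact fromV_cons_intro rfl (fromV_nil _)
  | succ m ih =>
    rw [trunc_succ]
    exact fromV_cons_intro rfl (x.2 m ▸ ih)

lemma trailSrc_trunc (x : LeftPath rE sE) (v : V) (m : ℕ) :
    trailSrc sE v (x.trunc (m + 1)) = sE (x.1 0) := by
  induction m generalizing v with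
  | zero => rw [trunc_succ, trunc_zero, trailSrc_cons]; rfl
  | succ m ih => rw [trunc_succ, trailSrc_cons, ih]

lemma trunc_shift (x : LeftPath rE sE) (m : ℕ) :
    x.trunc (m + 1) = x.shift.trunc m ++ [x.1 0] := by
  induction m with
  | zero => simp [trunc_succ, trunc_zero]
  | succ m ih =>
    rw [trunc_succ, ih, trunc_succ]
    rfl

/-- The segment `x_{b+a-1} … x_b` of a left-infinite path. -/
def lmid (x : LeftPath rE sE) (a b : ℕ) : List E :=
  ((List.range a).reverse).map fun j => x.1 (b + j)

lemma lmid_length (x : LeftPath rE sE) (a b : ℕ) : (lmid x a b).length = a := by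
  simp [lmid]

lemma trunc_add (x : LeftPath rE sE) (a b : ℕ) :
    x.trunc (b + a) = lmid x a b ++ x.trunc b := by
  unfold LeftPath.trunc lmid
  rw [List.range_add, List.reverse_append, List.map_append, List.map_reverse,
    List.map_reverse, List.map_map]
  simp [Function.comp_def]

lemma seg_eq (x : BiPath rE sE) (n : ℤ) (m : ℕ) :
    x.seg n m = (List.range m).map (fun i : ℕ => x.1 (n + (i : ℤ))) := by
  unfold BiPath.seg
  simp only [bind_pure_comp, List.map_eq_map, List.map_map]
  rfl

lemma seg_zero (x : BiPath rE sE) (n : ℤ) : x.seg n 0 = [] := by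
  rw [seg_eq]; rfl

lemma seg_length (x : BiPath rE sE) (n : ℤ) (m : ℕ) : (x.seg n m).length = m := by
  rw [seg_eq]; simp

lemma seg_succ_left (x : BiPath rE sE) (n : ℤ) (m : ℕ) :
    x.seg n (m + 1) = x.1 n :: x.seg (n + 1) m := by
  rw [seg_eq, seg_eq, List.range_succ_eq_map, List.map_cons, List.map_map]
  congr 1
  · norm_num
  · apply List.map_congr_left
    intro i _
    simp only [Function.comp_apply]
    congr 1
    push_cast
    ring

lemma fromV_seg (x : BiPath rE sE) (n : ℤ) (m : ℕ) :
    FromV rE sE (rE (x.1 n)) (x.seg n m) := by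
  induction m generalizing n with
  | zero => rw [seg_zero]; exact fromV_nil _
  | succ m ih =>
    rw [seg_succ_left]
    exact fromV_cons_intro rfl (x.2 n ▸ ih (n + 1))

lemma seg_add (x : BiPath rE sE) (n : ℤ) (a b : ℕ) :
    x.seg n (a + b) = x.seg n a ++ x.seg (n + a) b := by
  rw [seg_eq, seg_eq, seg_eq, List.range_add, List.map_append, List.map_map]
  congr 1
  apply List.map_congr_left
  intro i _
  simp only [Function.comp_apply]
  congr 1; push_cast; ring

lemma tail_apply (x : BiPath rE sE) (N : ℤ) (k : ℕ) :
    (x.tail N).1 k = x.1 (N - k) := rfl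

lemma trunc_getElem (x : LeftPath rE sE) (m i : ℕ) (h : i < (x.trunc m).length) :
    (x.trunc m)[i] = x.1 (m - 1 - i) := by
  unfold LeftPath.trunc
  simp [List.getElem_reverse]

lemma tail_trunc (x : BiPath rE sE) (N : ℤ) (m : ℕ) :
    (x.tail N).trunc m = x.seg (N + 1 - m) m := by
  rw [seg_eq]
  apply List.ext_getElem
  · rw [trunc_length]; simp
  intro i h₁ h₂
  rw [trunc_length] at h₁
  rw [trunc_getElem, tail_apply]
  rw [List.getElem_map, List.getElem_range]
  have h3 : N - (↑(m - 1 - i) : ℤ) = N + 1 - m + i := by omega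
  rw [h3]

lemma tail_shift (x : BiPath rE sE) (N : ℤ) :
    (x.tail N).shift = x.tail (N - 1) := by
  apply Subtype.ext
  funext k
  show x.1 (N - (k + 1 : ℕ)) = x.1 (N - 1 - k)
  congr 1
  push_cast
  ring

lemma translate_tail (x : BiPath rE sE) (N : ℤ) :
    (x.translate).tail N = x.tail (N - 1) := by
  apply Subtype.ext
  funext k
  show x.1 (N - k - 1) = x.1 (N - 1 - k)
  congr 1
  ring

/-- Extension of a left-infinite path by one more edge on the right. -/
def LeftPath.extend (x : LeftPath rE sE) (e : E) (he : sE (x.1 0) = rE e) :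
    LeftPath rE sE :=
  ⟨fun k => match k with
    | 0 => e
    | k + 1 => x.1 k,
   fun k => match k with
    | 0 => he
    | k + 1 => x.2 k⟩

lemma extend_shift (x : LeftPath rE sE) (e : E) (he : sE (x.1 0) = rE e) :
    (x.extend e he).shift = x :=
  Subtype.ext (funext fun _ => rfl)

lemma extend_trunc (x : LeftPath rE sE) (e : E) (he : sE (x.1 0) = rE e) (m : ℕ) :
    (x.extend e he).trunc (m + 1) = x.trunc m ++ [e] := by
  rw [trunc_shift, extend_shift]
  rfl

end Paths

section Act

variable {rE sE : E → V} (A : SSA V E rE sE)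

lemma SSA.act_nil (g : A.G) : A.act g [] = [] := by
  have := A.act_length g [] (fromV_nil _)
  simpa using List.length_eq_zero_iff.mp this

/-- Splitting an action along a decomposition of the path and of its image. -/
lemma SSA.act_split {g : A.G} {l₁ l₂ r₁ r₂ : List E}
    (h : FromV rE sE (A.d g) (l₁ ++ l₂)) (hact : A.act g (l₁ ++ l₂) = r₁ ++ r₂)
    (hlen : r₁.length = l₁.length) :
    A.act g l₁ = r₁ ∧ A.act (A.res g l₁) l₂ = r₂ := by
  obtain ⟨h₁, h₂⟩ := fromV_append h
  rw [A.act_append g l₁ l₂ h₁ h₂] at hact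
  have hl : (A.act g l₁).length = r₁.length := by
    rw [A.act_length g l₁ h₁, hlen]
  exact List.append_inj hact hl

/-- A strong contracting core: all sufficiently deep restrictions of any `g`
lie in the fixed finite set. -/
lemma SSA.exists_strong_core [Finite E] (hA : A.Contracting) :
    ∃ 𝒩 : Set A.G, 𝒩.Finite ∧ ∀ g : A.G, ∃ N : ℕ, ∀ l : List E,
      FromV rE sE (A.d g) l → N ≤ l.length → A.res g l ∈ 𝒩 := by
  classical
  obtain ⟨F₀, hF₀fin, hcore⟩ := hA
  choose n hn using hcore
  set F₁ : Set A.G := F₀ ∪ (fun p : A.G × E => A.res p.1 [p.2]) '' (F₀ ×ˢ Set.univ)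
    with hF₁
  have hF₁fin : F₁.Finite :=
    hF₀fin.union ((hF₀fin.prod Set.finite_univ).image _)
  obtain ⟨N₁, hN₁⟩ : ∃ N₁, ∀ h ∈ F₁, n h ≤ N₁ := by
    obtain ⟨N₁, hN₁⟩ := (hF₁fin.image n).bddAbove
    exact ⟨N₁, fun h hh => hN₁ (Set.mem_image_of_mem _ hh)⟩
  set 𝒩 : Set A.G :=
    (fun p : A.G × List E => A.res p.1 p.2) '' (F₀ ×ˢ {l : List E | l.length ≤ N₁ + 1})
    with h𝒩
  have h𝒩fin : 𝒩.Finite :=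
    (hF₀fin.prod (List.finite_length_le E (N₁ + 1))).image _
  -- all restrictions of elements of F₀ lie in 𝒩
  have key : ∀ (k : ℕ) (f : A.G) (l : List E), f ∈ F₀ → FromV rE sE (A.d f) l →
      l.length ≤ k → A.res f l ∈ 𝒩 := by
    intro k
    induction k with
    | zero =>
      intro f l hf hl hlen
      exact ⟨⟨f, l⟩, ⟨hf, le_trans hlen (by omega)⟩, rfl⟩
    | succ k ih =>
      intro f l hf hl hlen
      by_cases hsmall : l.length ≤ N₁ + 1
      · exact ⟨⟨f, l⟩, ⟨hf, hsmall⟩, rfl⟩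
      -- l = e :: t with t long
      obtain ⟨e, t, rfl⟩ : ∃ e t, l = e :: t := by
        cases l with
        | nil => simp at hsmall
        | cons e t => exact ⟨e, t, rfl⟩
      obtain ⟨he, ht⟩ := fromV_cons hl
      -- h₁ := res f [e] ∈ F₁
      set h₁ : A.G := A.res f [e] with hh₁
      have hh₁F₁ : h₁ ∈ F₁ := Or.inr ⟨⟨f, e⟩, ⟨hf, trivial⟩, rfl⟩
      have hfe : FromV rE sE (A.d f) [e] := by
        rw [← List.nil_append [e]]
        exact fromV_append_intro (fromV_nil _) (by exact fromV_cons_intro he (fromV_nil _))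
      have hdh₁ : A.d h₁ = sE e := by
        rw [hh₁, A.d_res f [e] hfe]
        rfl
      -- split t = t₁ ++ t₂ with t₁.length = n h₁
      have hlen₁ : n h₁ ≤ t.length := by
        have := hN₁ h₁ hh₁F₁
        simp only [List.length_cons] at hsmall
        omega
      obtain ⟨t₁, t₂, rfl, hlt₁⟩ : ∃ t₁ t₂, t = t₁ ++ t₂ ∧ t₁.length = n h₁ :=
        ⟨t.take (n h₁), t.drop (n h₁), (List.take_append_drop _ _).symm,
          List.length_take_of_le hlen₁⟩
      obtain ⟨ht₁, ht₂⟩ := fromV_append (hdh₁ ▸ ht)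
      have hd_eq : A.d h₁ = trailSrc sE (A.d f) [e] := A.d_res f [e] hfe
      have ht' : FromV rE sE (trailSrc sE (A.d f) [e]) (t₁ ++ t₂) :=
        hd_eq ▸ fromV_append_intro ht₁ ht₂
      have hstep : A.res f (e :: (t₁ ++ t₂)) = A.res (A.res h₁ t₁) t₂ := by
        have e1 : e :: (t₁ ++ t₂) = [e] ++ (t₁ ++ t₂) := rfl
        rw [e1, A.res_append f [e] (t₁ ++ t₂) hfe ht', ← hh₁,
          A.res_append h₁ t₁ t₂ ht₁ ht₂]
      rw [hstep]
      have hf' : A.res h₁ t₁ ∈ F₀ := hn h₁ t₁ ht₁ hlt₁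
      have hd' : A.d (A.res h₁ t₁) = trailSrc sE (A.d h₁) t₁ := A.d_res h₁ t₁ ht₁
      refine ih (A.res h₁ t₁) t₂ hf' (hd' ▸ ht₂) ?_
      simp only [List.length_cons, List.length_append] at hlen
      omega
  refine ⟨𝒩, h𝒩fin, fun g => ⟨n g, fun l hl hlen => ?_⟩⟩
  obtain ⟨l₁, l₂, rfl, hl₁⟩ : ∃ l₁ l₂, l = l₁ ++ l₂ ∧ l₁.length = n g :=
    ⟨l.take (n g), l.drop (n g), (List.take_append_drop _ _).symm,
      List.length_take_of_le (by omega)⟩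
  obtain ⟨h₁', h₂'⟩ := fromV_append hl
  rw [A.res_append g l₁ l₂ h₁' h₂']
  have hf : A.res g l₁ ∈ F₀ := hn g l₁ h₁' hl₁
  have hd : A.d (A.res g l₁) = trailSrc sE (A.d g) l₁ := A.d_res g l₁ h₁'
  exact key l₂.length (A.res g l₁) l₂ hf (hd ▸ h₂') le_rfl

end Act

section Equiv

variable {rE sE : E → V} (A : SSA V E rE sE)

lemma SSA.c_eq_of_act_trunc {g : A.G} {x y : LeftPath rE sE} {m : ℕ}
    (hd : A.d g = rE (x.1 m)) (hact : A.act g (x.trunc (m + 1)) = y.trunc (m + 1)) :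
    A.c g = rE (y.1 m) := by
  have h1 : FromV rE sE (A.c g) (A.act g (x.trunc (m + 1))) :=
    A.act_fromV g _ (hd ▸ fromV_trunc x m)
  rw [hact] at h1
  exact (h1.2 (y.1 m) (trunc_head y m)).symm

lemma SSA.act_inv_act {g : A.G} {l : List E} (h : FromV rE sE (A.d g) l) :
    A.act (A.inv g) (A.act g l) = l := by
  rw [← A.act_mul g (A.inv g) l (A.d_inv g) h, A.inv_mul, A.act_unit _ l h]

lemma SSA.asympEq_refl [Finite V] (x : LeftPath rE sE) : A.AsympEq x x := by
  refine ⟨fun m => A.unit (rE (x.1 m)), ?_, fun m => A.d_unit _, fun m => ?_⟩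
  · exact Set.Finite.subset ((Set.finite_univ (α := V)).image A.unit)
      (by rintro - ⟨m, rfl⟩; exact ⟨rE (x.1 m), trivial, rfl⟩)
  · exact A.act_unit _ _ (fromV_trunc x m)

lemma SSA.asympEq_symm {x y : LeftPath rE sE} (h : A.AsympEq x y) : A.AsympEq y x := by
  obtain ⟨g, hfin, hd, hact⟩ := h
  refine ⟨fun m => A.inv (g m), ?_, fun m => ?_, fun m => ?_⟩
  · exact Set.Finite.subset (hfin.image A.inv)
      (by rintro - ⟨m, rfl⟩; exact ⟨g m, ⟨m, rfl⟩, rfl⟩)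
  · rw [A.d_inv]
    exact A.c_eq_of_act_trunc (hd m) (hact m)
  · rw [← hact m]
    exact A.act_inv_act (hd m ▸ fromV_trunc x m)

lemma SSA.asympEq_trans {x y z : LeftPath rE sE} (h₁ : A.AsympEq x y)
    (h₂ : A.AsympEq y z) : A.AsympEq x z := by
  obtain ⟨g, hgfin, hgd, hgact⟩ := h₁
  obtain ⟨h, hhfin, hhd, hhact⟩ := h₂
  refine ⟨fun m => A.mul (h m) (g m), ?_, fun m => ?_, fun m => ?_⟩
  · exact Set.Finite.subset (Set.Finite.image2 A.mul hhfin hgfin)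
      (by rintro - ⟨m, rfl⟩; exact Set.mem_image2_of_mem ⟨m, rfl⟩ ⟨m, rfl⟩)
  · rw [A.d_mul _ _ (by rw [hhd m, A.c_eq_of_act_trunc (hgd m) (hgact m)])]
    exact hgd m
  · rw [A.act_mul _ _ _ (by rw [hhd m, A.c_eq_of_act_trunc (hgd m) (hgact m)])
      (hgd m ▸ fromV_trunc x m), hgact m, hhact m]

lemma SSA.asympEq_equivalence [Finite V] :
    Equivalence (A.AsympEq (rE := rE) (sE := sE)) :=
  ⟨A.asympEq_refl, A.asympEq_symm, A.asympEq_trans⟩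

lemma SSA.quot_mk_eq_iff [Finite V] (x y : LeftPath rE sE) :
    Quot.mk A.AsympEq x = Quot.mk A.AsympEq y ↔ A.AsympEq x y := by
  rw [Quot.eq]
  exact (A.asympEq_equivalence).eqvGen_iff

end Equiv

section Nucleus

variable {rE sE : E → V} (A : SSA V E rE sE)

/-- Restricting a groupoid element acting on a truncation to a deep suffix. -/
lemma SSA.res_trunc_spec {g : A.G} (x y : LeftPath rE sE) (k a : ℕ)
    (hd : A.d g = rE (x.1 (k + a)))
    (hact : A.act g (x.trunc (k + a + 1)) = y.trunc (k + a + 1)) :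
    FromV rE sE (A.d g) (lmid x a (k + 1)) ∧
    A.d (A.res g (lmid x a (k + 1))) = rE (x.1 k) ∧
    A.act (A.res g (lmid x a (k + 1))) (x.trunc (k + 1)) = y.trunc (k + 1) := by
  have e1 : k + a + 1 = (k + 1) + a := by omega
  rw [e1, trunc_add x a (k + 1), trunc_add y a (k + 1)] at hact
  have hfull : FromV rE sE (A.d g) (lmid x a (k + 1) ++ x.trunc (k + 1)) := by
    rw [← trunc_add x a (k + 1), ← e1]
    exact hd ▸ fromV_trunc x (k + a)
  obtain ⟨hfv₁, hfv₂⟩ := fromV_append hfull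
  obtain ⟨-, hact₂⟩ := A.act_split hfull hact (by rw [lmid_length, lmid_length])
  have hdres : A.d (A.res g (lmid x a (k + 1))) = rE (x.1 k) := by
    rw [A.d_res g _ hfv₁]
    exact (hfv₂.2 (x.1 k) (trunc_head x k)).symm
  exact ⟨hfv₁, hdres, hact₂⟩

variable {𝒩 : Set A.G}

/-- Any asymptotic equivalence is witnessed pointwise by nucleus elements. -/
lemma SSA.asympEq_nucleus (Nf : A.G → ℕ)
    (hNf : ∀ (g : A.G) (l : List E), FromV rE sE (A.d g) l → Nf g ≤ l.length → A.res g l ∈ 𝒩)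
    {x y : LeftPath rE sE} (h : A.AsympEq x y) (k : ℕ) :
    ∃ g ∈ 𝒩, A.d g = rE (x.1 k) ∧ A.act g (x.trunc (k + 1)) = y.trunc (k + 1) := by
  obtain ⟨g, hfin, hd, hact⟩ := h
  obtain ⟨K, hK⟩ : ∃ K : ℕ, ∀ m, Nf (g m) ≤ K := by
    obtain ⟨K, hK⟩ := (hfin.image Nf).bddAbove
    exact ⟨K, fun m => hK ⟨g m, ⟨m, rfl⟩, rfl⟩⟩
  obtain ⟨hfv, hdres, hact₂⟩ := A.res_trunc_spec x y k K (hd (k + K)) (hact (k + K))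
  refine ⟨A.res (g (k + K)) (lmid x K (k + 1)), ?_, hdres, hact₂⟩
  exact hNf _ _ hfv (by rw [lmid_length]; exact hK _)

lemma SSA.asympEq_of_nucleus (h𝒩 : 𝒩.Finite) {x y : LeftPath rE sE}
    (h : ∀ k : ℕ, ∃ g ∈ 𝒩, A.d g = rE (x.1 k) ∧
      A.act g (x.trunc (k + 1)) = y.trunc (k + 1)) : A.AsympEq x y := by
  choose c hc₁ hc₂ hc₃ using h
  exact ⟨c, h𝒩.subset (by rintro - ⟨m, rfl⟩; exact hc₁ m), hc₂, hc₃⟩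

lemma SSA.act_seg_prefix {g : A.G} {x y : BiPath rE sE} {n : ℤ} {m M : ℕ} (hmM : m ≤ M)
    (hd : A.d g = rE (x.1 n)) (hact : A.act g (x.seg n M) = y.seg n M) :
    A.act g (x.seg n m) = y.seg n m := by
  obtain ⟨a, rfl⟩ : ∃ a, M = m + a := ⟨M - m, by omega⟩
  rw [seg_add x n m a, seg_add y n m a] at hact
  have hfull : FromV rE sE (A.d g) (x.seg n m ++ x.seg (n + m) a) := by
    rw [← seg_add x n m a]
    exact hd ▸ fromV_seg x n (m + a)
  exact (A.act_split hfull hact (by rw [seg_length, seg_length])).1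

lemma SSA.tails_of_asympEqZ {x y : BiPath rE sE} (h : A.AsympEqZ x y) (N : ℤ) :
    A.AsympEq (x.tail N) (y.tail N) := by
  obtain ⟨g, hfin, hd, hact⟩ := h
  refine ⟨fun m => g (N - m), ?_, fun m => hd (N - m), fun m => ?_⟩
  · exact hfin.subset (by rintro - ⟨m, rfl⟩; exact ⟨N - m, rfl⟩)
  · have e1 : N + 1 - ((m : ℤ) + 1) = N - m := by ring
    rw [tail_trunc, tail_trunc]
    push_cast
    rw [e1]
    exact hact (N - m) (m + 1)

lemma SSA.asympEqZ_of_tails [Finite V] (h𝒩 : 𝒩.Finite) (Nf : A.G → ℕ)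
    (hNf : ∀ (g : A.G) (l : List E), FromV rE sE (A.d g) l → Nf g ≤ l.length → A.res g l ∈ 𝒩)
    {x y : BiPath rE sE}
    (h : ∀ n : ℕ, A.AsympEq (x.tail ((n : ℤ) - 1)) (y.tail ((n : ℤ) - 1))) :
    A.AsympEqZ x y := by
  classical
  have main : ∀ n : ℤ, ∃ g ∈ 𝒩, A.d g = rE (x.1 n) ∧
      ∀ m : ℕ, A.act g (x.seg n m) = y.seg n m := by
    intro n
    -- candidates acting correctly on longer and longer segments
    have cand : ∀ k : ℕ, ∃ j : ℕ, k ≤ j ∧ ∃ g ∈ 𝒩, A.d g = rE (x.1 n) ∧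
        A.act g (x.seg n (j + 1)) = y.seg n (j + 1) := by
      intro k
      set N : ℕ := (n + 1 + k).toNat + 1 with hN
      have hNn : (N : ℤ) - 1 ≥ n + 1 + k := by
        rw [hN]
        push_cast
        have := Int.self_le_toNat (n + 1 + k)
        omega
      set j : ℕ := ((N : ℤ) - 1 - n).toNat with hj
      have hjk : k ≤ j := by
        rw [hj]
        omega
      have hNj : (N : ℤ) - 1 - j = n := by
        rw [hj]
        have : ((N : ℤ) - 1 - n) ≥ 0 := by omega
        omega
      obtain ⟨g, hg𝒩, hgd, hgact⟩ := A.asympEq_nucleus Nf hNf (h N) j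
      refine ⟨j, hjk, g, hg𝒩, ?_, ?_⟩
      · rwa [tail_apply, hNj] at hgd
      · rw [tail_trunc, tail_trunc] at hgact
        have e1 : ((N : ℤ) - 1) + 1 - ((j + 1 : ℕ) : ℤ) = n := by push_cast; omega
        rwa [e1] at hgact
    choose j hjk c hc𝒩 hcd hcact using cand
    have : Finite ↥𝒩 := h𝒩.to_subtype
    obtain ⟨g₀, hg₀⟩ := Finite.exists_infinite_fiber (fun k => (⟨c k, hc𝒩 k⟩ : ↥𝒩))
    have hfib : ((fun k => (⟨c k, hc𝒩 k⟩ : ↥𝒩)) ⁻¹' {g₀}).Infinite :=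
      Set.infinite_coe_iff.mp hg₀
    refine ⟨g₀.1, g₀.2, ?_, ?_⟩
    · obtain ⟨k₀, hk₀⟩ := hfib.nonempty
      have hck : c k₀ = g₀.1 := congrArg Subtype.val (Set.mem_singleton_iff.mp hk₀)
      rw [← hck]
      exact hcd k₀
    · intro m
      obtain ⟨k, hk, hmk⟩ := hfib.exists_gt m
      have hck : c k = g₀.1 := congrArg Subtype.val (Set.mem_singleton_iff.mp hk)
      have hpre : A.act (c k) (x.seg n m) = y.seg n m :=
        A.act_seg_prefix (by have := hjk k; omega : m ≤ j k + 1) (hcd k) (hcact k)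
      rwa [hck] at hpre
  choose g hg𝒩 hgd hgact using main
  exact ⟨g, h𝒩.subset (by rintro - ⟨m, rfl⟩; exact hg𝒩 m), hgd, hgact⟩

end Nucleus

section Extension

variable {rE sE : E → V} (A : SSA V E rE sE)

lemma SSA.exists_extension [Finite V] [Finite E] {𝒩 : Set A.G} (h𝒩 : 𝒩.Finite)
    (Nf : A.G → ℕ)
    (hNf : ∀ (g : A.G) (l : List E), FromV rE sE (A.d g) l → Nf g ≤ l.length → A.res g l ∈ 𝒩)
    (T : Quot A.AsympEq → Quot A.AsympEq)
    (hT : ∀ x : LeftPath rE sE, T (Quot.mk A.AsympEq x) = Quot.mk A.AsympEq x.shift)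
    (c : Quot A.AsympEq) (v : LeftPath rE sE) (hc : T c = Quot.mk A.AsympEq v) :
    ∃ u : LeftPath rE sE, u.shift = v ∧ Quot.mk A.AsympEq u = c := by
  classical
  obtain ⟨w, rfl⟩ := Quot.exists_rep c
  rw [hT w] at hc
  obtain ⟨g, hfin, hd, hact⟩ := (A.quot_mk_eq_iff _ _).mp hc
  have hdm : ∀ m, A.d (g m) = rE (w.1 (m + 1)) := hd
  have hfvw : ∀ m, FromV rE sE (A.d (g m)) (LeftPath.shift w |>.trunc (m + 1)) :=
    fun m => (hd m) ▸ fromV_trunc w.shift m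
  have hdres0 : ∀ m, A.d (A.res (g m) (w.shift.trunc (m + 1))) = rE (w.1 0) := by
    intro m
    rw [A.d_res _ _ (hfvw m), trailSrc_trunc]
    exact w.2 0
  have hfv0 : ∀ m, FromV rE sE (A.d (A.res (g m) (w.shift.trunc (m + 1)))) [w.1 0] :=
    fun m => fromV_cons_intro (hdres0 m).symm (fromV_nil _)
  have hsingle : ∀ m, ∃ e : E,
      A.act (A.res (g m) (w.shift.trunc (m + 1))) [w.1 0] = [e] := by
    intro m
    have hlen := A.act_length _ [w.1 0] (hfv0 m)
    exact List.length_eq_one_iff.mp (by rw [hlen]; rfl)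
  choose f hf using hsingle
  have hactw : ∀ m, A.act (g m) (w.trunc (m + 2)) = v.trunc (m + 1) ++ [f m] := by
    intro m
    rw [show m + 2 = (m + 1) + 1 from rfl, trunc_shift w (m + 1),
      A.act_append _ _ _ (hfvw m)
        (by rw [← A.d_res _ _ (hfvw m)]; exact hfv0 m),
      hact m, hf m]
  have hfvw2 : ∀ m, FromV rE sE (A.d (g m)) (w.trunc (m + 2)) :=
    fun m => (hdm m) ▸ fromV_trunc w (m + 1)
  obtain ⟨e, hef⟩ := Finite.exists_infinite_fiber f
  have hfib : (f ⁻¹' {e}).Infinite := Set.infinite_coe_iff.mp hef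
  have hrange : sE (v.1 0) = rE e := by
    obtain ⟨m, hm⟩ := hfib.nonempty
    have hfm : f m = e := Set.mem_singleton_iff.mp hm
    have h1 : FromV rE sE (A.c (g m)) (A.act (g m) (w.trunc (m + 2))) :=
      A.act_fromV _ _ (hfvw2 m)
    rw [hactw m, hfm] at h1
    obtain ⟨-, h2⟩ := fromV_append h1
    rw [trailSrc_trunc] at h2
    exact (h2.2 e rfl).symm
  refine ⟨v.extend e hrange, extend_shift _ _ _, ?_⟩
  rw [A.quot_mk_eq_iff]
  refine A.asympEq_symm (A.asympEq_of_nucleus h𝒩 ?_)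
  intro k
  obtain ⟨K, hK⟩ : ∃ K : ℕ, ∀ m, Nf (g m) ≤ K := by
    obtain ⟨K, hK⟩ := (hfin.image Nf).bddAbove
    exact ⟨K, fun m => hK ⟨g m, ⟨m, rfl⟩, rfl⟩⟩
  obtain ⟨m, hm, hmk⟩ := hfib.exists_gt (k + K)
  have hfm : f m = e := Set.mem_singleton_iff.mp hm
  obtain ⟨a, ha, hKa⟩ : ∃ a, m + 1 = k + a ∧ K + 1 ≤ a := ⟨m + 1 - k, by omega, by omega⟩
  have hactm : A.act (g m) (w.trunc (k + a + 1)) =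
      (v.extend e hrange).trunc (k + a + 1) := by
    have e2 : k + a + 1 = m + 2 := by omega
    rw [e2, hactw m, hfm, show m + 2 = (m + 1) + 1 from rfl, extend_trunc]
  have hdm' : A.d (g m) = rE (w.1 (k + a)) := by
    rw [show k + a = m + 1 by omega]
    exact hdm m
  obtain ⟨hfv₁, hdres, hact₂⟩ :=
    A.res_trunc_spec w (v.extend e hrange) k a hdm' hactm
  exact ⟨A.res (g m) (lmid w a (k + 1)),
    hNf _ _ hfv₁ (by rw [lmid_length]; exact le_trans (hK m) (by omega)), hdres, hact₂⟩

end Extension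

section Surjectivity

variable {rE sE : E → V} (A : SSA V E rE sE)

lemma SSA.exists_bipath [Finite V] [Finite E] {𝒩 : Set A.G} (h𝒩 : 𝒩.Finite)
    (Nf : A.G → ℕ)
    (hNf : ∀ (g : A.G) (l : List E), FromV rE sE (A.d g) l → Nf g ≤ l.length → A.res g l ∈ 𝒩)
    (T : Quot A.AsympEq → Quot A.AsympEq)
    (hT : ∀ x : LeftPath rE sE, T (Quot.mk A.AsympEq x) = Quot.mk A.AsympEq x.shift)
    (z : ℕ → Quot A.AsympEq) (hz : ∀ n, T (z (n + 1)) = z n) :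
    ∃ w : BiPath rE sE, ∀ n : ℕ, Quot.mk A.AsympEq (w.tail ((n : ℤ) - 1)) = z n := by
  classical
  let step : ∀ n (p : {v : LeftPath rE sE // Quot.mk A.AsympEq v = z n}),
      {q : {v : LeftPath rE sE // Quot.mk A.AsympEq v = z (n + 1)} // q.1.shift = p.1} :=
    fun n p =>
      let hex := A.exists_extension h𝒩 Nf hNf T hT (z (n + 1)) p.1
        (by rw [hz n, p.2])
      ⟨⟨hex.choose, hex.choose_spec.2⟩, hex.choose_spec.1⟩
  let u : ∀ n : ℕ, {v : LeftPath rE sE // Quot.mk A.AsympEq v = z n} :=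
    fun n => Nat.rec ⟨(Quot.exists_rep (z 0)).choose, (Quot.exists_rep (z 0)).choose_spec⟩
      (fun n p => (step n p).1) n
  have hshift : ∀ n, (u (n + 1)).1.shift = (u n).1 := fun n => (step n (u n)).2
  have hs : ∀ n m, (u n).1.1 m = (u (n + 1)).1.1 (m + 1) :=
    fun n m => (congrFun (congrArg Subtype.val (hshift n)) m).symm
  have hiter : ∀ (i n j : ℕ), (u n).1.1 j = (u (n + i)).1.1 (j + i) := by
    intro i
    induction i with
    | zero => intro n j; rfl
    | succ i ih =>
      intro n j
      rw [ih n j]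
      exact hs (n + i) (j + i)
  set M : ℤ → ℕ := fun k => (k + 1).toNat with hM
  set wf : ℤ → E := fun k => (u (M k)).1.1 (((M k : ℤ) - 1 - k).toNat) with hwf
  have huni : ∀ (k : ℤ) (n : ℕ), k + 1 ≤ (n : ℤ) →
      wf k = (u n).1.1 (((n : ℤ) - 1 - k).toNat) := by
    intro k n hkn
    have hMkn : M k ≤ n := by simp only [hM]; omega
    obtain ⟨i, rfl⟩ : ∃ i, n = M k + i := ⟨n - M k, by omega⟩
    have h1 := hiter i (M k) (((M k : ℤ) - 1 - k).toNat)
    rw [hwf]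
    simp only []
    rw [h1]
    have e1 : ((M k : ℤ) - 1 - k).toNat + i = (((M k + i : ℕ) : ℤ) - 1 - k).toNat := by
      simp only [hM]
      omega
    rw [e1]
  have hedge : ∀ k : ℤ, sE (wf k) = rE (wf (k + 1)) := by
    intro k
    have h1 := huni k (M k + 1) (by simp only [hM]; omega)
    have h2 := huni (k + 1) (M k + 1) (by simp only [hM]; omega)
    rw [h1, h2]
    have e1 : (((M k + 1 : ℕ) : ℤ) - 1 - k).toNat =
        ((((M k + 1 : ℕ) : ℤ) - 1 - (k + 1)).toNat) + 1 := by
      simp only [hM]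
      omega
    rw [e1]
    exact (u (M k + 1)).1.2 _
  refine ⟨⟨wf, hedge⟩, fun n => ?_⟩
  have htail : BiPath.tail ⟨wf, hedge⟩ ((n : ℤ) - 1) = (u n).1 := by
    apply Subtype.ext
    funext j
    show wf ((n : ℤ) - 1 - j) = (u n).1.1 j
    rw [huni ((n : ℤ) - 1 - j) n (by omega)]
    have e1 : ((n : ℤ) - 1 - ((n : ℤ) - 1 - j)).toNat = j := by omega
    rw [e1]
  rw [htail]
  exact (u n).2

end Surjectivity

section Topology

variable {rE sE : E → V}

lemma leftPath_compactSpace [Finite E] [TopologicalSpace E] [DiscreteTopology E] :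
    CompactSpace (LeftPath rE sE) := by
  have : CompactSpace E := Finite.compactSpace
  have hcl : IsClosed {x : ℕ → E | ∀ k : ℕ, sE (x (k + 1)) = rE (x k)} := by
    have he : {x : ℕ → E | ∀ k : ℕ, sE (x (k + 1)) = rE (x k)} =
        ⋂ k : ℕ, (fun x : ℕ → E => (x (k + 1), x k)) ⁻¹' {p : E × E | sE p.1 = rE p.2} := by
      ext x
      simp [Set.mem_iInter]
    rw [he]
    exact isClosed_iInter fun k => (isClosed_discrete _).preimage
      ((continuous_apply (k + 1)).prodMk (continuous_apply k))
  exact isCompact_iff_compactSpace.mp hcl.isCompact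

lemma biPath_compactSpace [Finite E] [TopologicalSpace E] [DiscreteTopology E] :
    CompactSpace (BiPath rE sE) := by
  have : CompactSpace E := Finite.compactSpace
  have hcl : IsClosed {x : ℤ → E | ∀ k : ℤ, sE (x k) = rE (x (k + 1))} := by
    have he : {x : ℤ → E | ∀ k : ℤ, sE (x k) = rE (x (k + 1))} =
        ⋂ k : ℤ, (fun x : ℤ → E => (x k, x (k + 1))) ⁻¹' {p : E × E | sE p.1 = rE p.2} := by
      ext x
      simp [Set.mem_iInter]
    rw [he]
    exact isClosed_iInter fun k => (isClosed_discrete _).preimage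
      ((continuous_apply k).prodMk (continuous_apply (k + 1)))
  exact isCompact_iff_compactSpace.mp hcl.isCompact

lemma continuous_tail [TopologicalSpace E] (N : ℤ) :
    Continuous (fun x : BiPath rE sE => x.tail N) := by
  apply Continuous.subtype_mk
  apply continuous_pi
  intro j
  exact (continuous_apply (N - (j : ℤ))).comp continuous_subtype_val

lemma trunc_ofFn (x : LeftPath rE sE) (m : ℕ) :
    x.trunc m = List.ofFn (fun i : Fin m => x.1 (m - 1 - (i : ℕ))) := by
  apply List.ext_getElem
  · rw [trunc_length, List.length_ofFn]
  intro i h₁ h₂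
  rw [trunc_getElem, List.getElem_ofFn]

lemma SSA.asympEq_isClosed (A : SSA V E rE sE) [Finite V] [Finite E]
    [TopologicalSpace E] [DiscreteTopology E]
    {𝒩 : Set A.G} (h𝒩 : 𝒩.Finite) (Nf : A.G → ℕ)
    (hNf : ∀ (g : A.G) (l : List E), FromV rE sE (A.d g) l → Nf g ≤ l.length → A.res g l ∈ 𝒩) :
    IsClosed {p : LeftPath rE sE × LeftPath rE sE | A.AsympEq p.1 p.2} := by
  have hchar : {p : LeftPath rE sE × LeftPath rE sE | A.AsympEq p.1 p.2} =
      ⋂ k : ℕ, ⋃ g ∈ 𝒩, {p : LeftPath rE sE × LeftPath rE sE |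
        A.d g = rE (p.1.1 k) ∧ A.act g (p.1.trunc (k + 1)) = p.2.trunc (k + 1)} := by
    ext p
    simp only [Set.mem_setOf_eq, Set.mem_iInter, Set.mem_iUnion]
    constructor
    · intro h k
      obtain ⟨g, hg𝒩, hgd, hgact⟩ := A.asympEq_nucleus Nf hNf h k
      exact ⟨g, hg𝒩, hgd, hgact⟩
    · intro h
      refine A.asympEq_of_nucleus h𝒩 fun k => ?_
      obtain ⟨g, hg𝒩, hgd, hgact⟩ := h k
      exact ⟨g, hg𝒩, hgd, hgact⟩
  rw [hchar]
  refine isClosed_iInter fun k => Set.Finite.isClosed_biUnion h𝒩 fun g _ => ?_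
  have hpre : {p : LeftPath rE sE × LeftPath rE sE |
      A.d g = rE (p.1.1 k) ∧ A.act g (p.1.trunc (k + 1)) = p.2.trunc (k + 1)} =
      (fun p : LeftPath rE sE × LeftPath rE sE =>
        ((fun i : Fin (k + 1) => p.1.1 i), (fun i : Fin (k + 1) => p.2.1 i))) ⁻¹'
      {q : (Fin (k + 1) → E) × (Fin (k + 1) → E) |
        A.d g = rE (q.1 ⟨k, Nat.lt_succ_self k⟩) ∧
        A.act g (List.ofFn fun i : Fin (k + 1) => q.1 i.rev) =
          List.ofFn fun i : Fin (k + 1) => q.2 i.rev} := by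
    ext p
    simp only [Set.mem_setOf_eq, Set.mem_preimage]
    have h1 : ∀ y : LeftPath rE sE,
        (List.ofFn fun i : Fin (k + 1) => y.1 ((i.rev : Fin (k + 1)) : ℕ)) =
          y.trunc (k + 1) := by
      intro y
      rw [trunc_ofFn]
      congr 1
      funext i
      have hrev : ((i.rev : Fin (k + 1)) : ℕ) = k + 1 - 1 - (i : ℕ) := by
        rw [Fin.val_rev]
        omega
      rw [hrev]
    rw [h1 p.1, h1 p.2]
  rw [hpre]
  have : DiscreteTopology ((Fin (k + 1) → E) × (Fin (k + 1) → E)) := by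
    have : DiscreteTopology (Fin (k + 1) → E) := Pi.discreteTopology
    infer_instance
  refine (isClosed_discrete _).preimage ?_
  refine Continuous.prodMk ?_ ?_
  · exact (continuous_pi fun i =>
      (continuous_apply ((i : Fin (k+1)) : ℕ)).comp continuous_subtype_val).comp continuous_fst
  · exact (continuous_pi fun i =>
      (continuous_apply ((i : Fin (k+1)) : ℕ)).comp continuous_subtype_val).comp continuous_snd

lemma t2Space_quot_of_isClosed {X : Type*} [TopologicalSpace X] [CompactSpace X] [T2Space X]
    {r : X → X → Prop} (hequiv : Equivalence r)
    (hcl : IsClosed {p : X × X | r p.1 p.2}) : T2Space (Quot r) := by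
  have hmk : ∀ x y : X, Quot.mk r x = Quot.mk r y ↔ r x y := fun x y => by
    rw [Quot.eq]
    exact hequiv.eqvGen_iff
  have hqm : IsClosedMap (Quot.mk r) := by
    intro C hC
    rw [← (isQuotientMap_quot_mk).isClosed_preimage]
    have hsat : Quot.mk r ⁻¹' (Quot.mk r '' C) =
        Prod.fst '' ({p : X × X | r p.1 p.2} ∩ Prod.snd ⁻¹' C) := by
      ext x
      simp only [Set.mem_preimage, Set.mem_image, Set.mem_inter_iff, Set.mem_setOf_eq]
      constructor
      · rintro ⟨c, hcC, hc⟩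
        exact ⟨(x, c), ⟨(hmk x c).mp hc.symm, hcC⟩, rfl⟩
      · rintro ⟨⟨a, b⟩, ⟨hr, hb⟩, rfl⟩
        exact ⟨b, hb, ((hmk a b).mpr hr).symm⟩
    rw [hsat]
    exact isClosedMap_fst_of_compactSpace _ (hcl.inter (hC.preimage continuous_snd))
  refine ⟨fun a b hab => ?_⟩
  obtain ⟨x, rfl⟩ := Quot.exists_rep a
  obtain ⟨y, rfl⟩ := Quot.exists_rep b
  have hA : IsClosed {t : X | r t x} := by
    have : {t : X | r t x} = (fun t : X => (t, x)) ⁻¹' {p : X × X | r p.1 p.2} := rfl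
    rw [this]
    exact hcl.preimage (continuous_id.prodMk continuous_const)
  have hB : IsClosed {t : X | r t y} := by
    have : {t : X | r t y} = (fun t : X => (t, y)) ⁻¹' {p : X × X | r p.1 p.2} := rfl
    rw [this]
    exact hcl.preimage (continuous_id.prodMk continuous_const)
  have hAB : Disjoint {t : X | r t x} {t : X | r t y} := by
    rw [Set.disjoint_left]
    intro t htA htB
    exact hab ((hmk x y).mpr (hequiv.trans (hequiv.symm htA) htB))
  obtain ⟨U, V, hUo, hVo, hAU, hBV, hUV⟩ :=
    SeparatedNhds.of_isCompact_isCompact hA.isCompact hB.isCompact hAB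
  refine ⟨(Quot.mk r '' Uᶜ)ᶜ, (Quot.mk r '' Vᶜ)ᶜ,
    (hqm _ hUo.isClosed_compl).isOpen_compl, (hqm _ hVo.isClosed_compl).isOpen_compl,
    ?_, ?_, ?_⟩
  · rintro ⟨t, htU, ht⟩
    exact htU (hAU ((hmk t x).mp ht))
  · rintro ⟨t, htV, ht⟩
    exact htV (hBV ((hmk t y).mp ht))
  · rw [Set.disjoint_left]
    intro c hc1 hc2
    obtain ⟨s, rfl⟩ := Quot.exists_rep c
    simp only [Set.mem_compl_iff, Set.mem_image, not_exists, not_and] at hc1 hc2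
    by_cases hsU : s ∈ U
    · by_cases hsV : s ∈ V
      · exact Set.disjoint_left.mp hUV hsU hsV
      · exact hc2 s hsV rfl
    · exact hc1 s hsU rfl

end Topology

/-- the limit solenoid `S = E^ℤ/∼` is homeomorphic to the
inverse limit `lim← (J, σ̃)`, equivariantly for the translation `τ` and the
induced shift `σ̃_∞`. -/
theorem solenoid_homeo_inverse_limit
    [Fintype V] [Fintype E] [TopologicalSpace E] [DiscreteTopology E]
    (rE sE : E → V) (A : SSA V E rE sE)
    (hA : A.Contracting) (hso : NoSources rE) (hsi : NoSinks sE)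
    (T : Quot A.AsympEq → Quot A.AsympEq)
    (hT : ∀ x : LeftPath rE sE,
      T (Quot.mk A.AsympEq x) = Quot.mk A.AsympEq x.shift) :
    ∃ θ : Quot A.AsympEqZ →
        {z : ℕ → Quot A.AsympEq // ∀ n, T (z (n + 1)) = z n},
      IsHomeomorph θ ∧
      -- θ([x]) = ([x(-∞,-1)], [x(-∞,0)], [x(-∞,1)], …)
      (∀ (x : BiPath rE sE) (n : ℕ),
        (θ (Quot.mk A.AsympEqZ x)).1 n =
          Quot.mk A.AsympEq (x.tail ((n : ℤ) - 1))) ∧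
      -- θ([τ(x)]) = σ̃_∞(θ([x]))
      (∀ x : BiPath rE sE,
        θ (Quot.mk A.AsympEqZ x.translate) =
          solShift T (θ (Quot.mk A.AsympEqZ x))) := by
  classical
  obtain ⟨𝒩, h𝒩, hstrong⟩ := A.exists_strong_core hA
  choose Nf hNf using hstrong
  letI : T2Space (LeftPath rE sE) :=
    inferInstanceAs (T2Space {x : ℕ → E // ∀ k, sE (x (k + 1)) = rE (x k)})
  letI : CompactSpace (LeftPath rE sE) := leftPath_compactSpace
  letI : CompactSpace (BiPath rE sE) := biPath_compactSpace
  letI : T2Space (Quot A.AsympEq) :=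
    t2Space_quot_of_isClosed A.asympEq_equivalence (A.asympEq_isClosed h𝒩 Nf hNf)
  letI : CompactSpace (Quot A.AsympEqZ) := by
    constructor
    have h := isCompact_univ.image (continuous_quot_mk (r := A.AsympEqZ))
    rwa [Set.image_univ, Set.range_quot_mk] at h
  have hzcond : ∀ (x : BiPath rE sE) (n : ℕ),
      T (Quot.mk A.AsympEq (x.tail ((((n + 1) : ℕ) : ℤ) - 1))) =
        Quot.mk A.AsympEq (x.tail ((n : ℤ) - 1)) := by
    intro x n
    rw [hT, tail_shift]
    have e : (((n + 1 : ℕ) : ℤ)) - 1 - 1 = (n : ℤ) - 1 := by push_cast; ring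
    rw [e]
  set f : BiPath rE sE → {z : ℕ → Quot A.AsympEq // ∀ n, T (z (n + 1)) = z n} :=
    fun x => ⟨fun n => Quot.mk A.AsympEq (x.tail ((n : ℤ) - 1)), fun n => hzcond x n⟩
    with hf
  have hwd : ∀ x y, A.AsympEqZ x y → f x = f y := by
    intro x y hxy
    apply Subtype.ext
    funext n
    exact Quot.sound (A.tails_of_asympEqZ hxy _)
  refine ⟨Quot.lift f hwd, ?_, ?_, ?_⟩
  · rw [isHomeomorph_iff_continuous_bijective]
    refine ⟨?_, ?_, ?_⟩
    · apply continuous_quot_lift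
      apply Continuous.subtype_mk
      exact continuous_pi fun n => continuous_quot_mk.comp (continuous_tail _)
    · intro a b hab
      obtain ⟨x, rfl⟩ := Quot.exists_rep a
      obtain ⟨y, rfl⟩ := Quot.exists_rep b
      refine Quot.sound (A.asympEqZ_of_tails h𝒩 Nf hNf fun n => ?_)
      have h1 : Quot.mk A.AsympEq (x.tail ((n : ℤ) - 1)) =
          Quot.mk A.AsympEq (y.tail ((n : ℤ) - 1)) :=
        congrFun (congrArg Subtype.val hab) n
      exact (A.quot_mk_eq_iff _ _).mp h1
    · intro z
      obtain ⟨w, hw⟩ := A.exists_bipath h𝒩 Nf hNf T hT z.1 z.2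
      exact ⟨Quot.mk A.AsympEqZ w, Subtype.ext (funext fun n => hw n)⟩
  · intro x n
    rfl
  · intro x
    apply Subtype.ext
    funext n
    match n with
    | 0 =>
      show Quot.mk A.AsympEq ((x.translate).tail (((0 : ℕ) : ℤ) - 1)) =
        T (Quot.mk A.AsympEq (x.tail (((0 : ℕ) : ℤ) - 1)))
      rw [hT, tail_shift, translate_tail]
    | Nat.succ m =>
      show Quot.mk A.AsympEq ((x.translate).tail ((((m + 1) : ℕ) : ℤ) - 1)) =
        Quot.mk A.AsympEq (x.tail ((m : ℤ) - 1))
      rw [translate_tail]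
      have e : (((m + 1 : ℕ) : ℤ)) - 1 - 1 = (m : ℤ) - 1 := by push_cast; ring
      rw [e]

end SSG
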